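/- arXiv:2412.06069 — 3 statements merged into one kernel-verified Lean document; each statement's English description precedes it below -/
import Mathlib

section
/- Let D ⊆ ℝ^d be a finite nonempty set, φ = max_{x ∈ D} ‖x‖₂, and for x ∈ D set z(x) = (√(φ² − ‖x‖₂²), xᵀ)ᵀ ∈ ℝ^{d+1}; for a query q ∈ ℝ^d set q_z = (0, qᵀ)ᵀ. Then a vector x* ∈ D satisfies ⟨x*, q⟩ = max_{x ∈ D} ⟨x, q⟩ if and only if ‖q_z − z(x*)‖₂ = min_{x ∈ D} ‖q_z − z(x)‖₂. That is, Maximum Inner Product Search over D is equivalent to Nearest Neighbor Search over the lifted set z(D). -/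
/-- Equivalence of MIPS and NNS under the lifting transformation:
`x* ∈ D` maximizes `⟨x, q⟩` over `D` iff `z x*` minimizes the distance to `q_z`
over the lifted set `z(D)`. -/
theorem stmt_3 {d : ℕ} (D : Finset (EuclideanSpace ℝ (Fin d))) (hD : D.Nonempty)
    (φ : ℝ) (hφ : φ = D.sup' hD (fun x => ‖x‖))
    (q : EuclideanSpace ℝ (Fin d))
    (z : EuclideanSpace ℝ (Fin d) → EuclideanSpace ℝ (Fin (d + 1)))
    (hz0 : ∀ x, z x 0 = Real.sqrt (φ ^ 2 - ‖x‖ ^ 2))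
    (hzs : ∀ x, ∀ i : Fin d, z x i.succ = x i)
    (qz : EuclideanSpace ℝ (Fin (d + 1)))
    (hq0 : qz 0 = 0)
    (hqs : ∀ i : Fin d, qz i.succ = q i)
    (xs : EuclideanSpace ℝ (Fin d)) (hxs : xs ∈ D) :
    (inner ℝ xs q : ℝ) = D.sup' hD (fun x => (inner ℝ x q : ℝ)) ↔
      ‖qz - z xs‖ = D.inf' hD (fun x => ‖qz - z x‖) := by
  -- key: for x ∈ D, ‖qz - z x‖^2 = ‖q‖^2 + φ^2 - 2 * ⟨x, q⟩
  have key : ∀ x ∈ D, ‖qz - z x‖ ^ 2 = ‖q‖ ^ 2 + φ ^ 2 - 2 * (inner ℝ x q : ℝ) := by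
    intro x hx
    have hle : ‖x‖ ≤ φ := hφ ▸ Finset.le_sup' (fun x => ‖x‖) hx
    have hnn : 0 ≤ φ ^ 2 - ‖x‖ ^ 2 := by nlinarith [norm_nonneg x]
    have hqq : ‖qz‖ ^ 2 = ‖q‖ ^ 2 := by
      rw [← real_inner_self_eq_norm_sq, ← real_inner_self_eq_norm_sq,
        PiLp.inner_apply, PiLp.inner_apply, Fin.sum_univ_succ]
      simp [hq0, hqs]
    have hzz : ‖z x‖ ^ 2 = φ ^ 2 := by
      rw [← real_inner_self_eq_norm_sq, PiLp.inner_apply, Fin.sum_univ_succ]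
      have : ∑ i : Fin d, z x i.succ * z x i.succ = ‖x‖ ^ 2 := by
        rw [← real_inner_self_eq_norm_sq, PiLp.inner_apply]
        simp [hzs, sq]
      simp only [RCLike.inner_apply, conj_trivial] at *
      rw [hz0, this, Real.mul_self_sqrt hnn]; ring
    have hiz : (inner ℝ qz (z x) : ℝ) = (inner ℝ x q : ℝ) := by
      rw [PiLp.inner_apply, Fin.sum_univ_succ, PiLp.inner_apply]
      simp [hq0, hqs, hzs, mul_comm]
    have := @norm_sub_sq_real (EuclideanSpace ℝ (Fin (d+1))) _ _ qz (z x)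
    rw [this, hqq, hzz, hiz]; ring
  have sup_iff : (inner ℝ xs q : ℝ) = D.sup' hD (fun x => (inner ℝ x q : ℝ)) ↔
      ∀ x ∈ D, (inner ℝ x q : ℝ) ≤ (inner ℝ xs q : ℝ) := by
    constructor
    · intro h x hx; rw [h]; exact Finset.le_sup' (fun x => (inner ℝ x q : ℝ)) hx
    · intro h
      exact le_antisymm (Finset.le_sup' (fun x => (inner ℝ x q : ℝ)) hxs)
        (Finset.sup'_le _ _ h)
  have inf_iff : ‖qz - z xs‖ = D.inf' hD (fun x => ‖qz - z x‖) ↔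
      ∀ x ∈ D, ‖qz - z xs‖ ≤ ‖qz - z x‖ := by
    constructor
    · intro h x hx; rw [h]; exact Finset.inf'_le _ hx
    · intro h
      exact le_antisymm (Finset.le_inf' _ _ h) (Finset.inf'_le _ hxs)
  rw [sup_iff, inf_iff]
  constructor
  · intro h x hx
    have h1 := key x hx
    have h2 := key xs hxs
    have h3 := h x hx
    have hsq : ‖qz - z xs‖ ^ 2 ≤ ‖qz - z x‖ ^ 2 := by linarith
    exact (pow_le_pow_iff_left₀ (norm_nonneg _) (norm_nonneg _) (by norm_num)).mp hsq
  · intro h x hx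
    have h1 := key x hx
    have h2 := key xs hxs
    have h3 := h x hx
    have hsq : ‖qz - z xs‖ ^ 2 ≤ ‖qz - z x‖ ^ 2 :=
      pow_le_pow_left₀ (norm_nonneg _) h3 2
    linarith
end

section
/- Let d : ℝ^D × ℝ^D → [0, ∞) be a distortion function that is continuous and coercive in its second argument, i.e., for every fixed x ∈ ℝ^D, d(x, y) → ∞ as ‖y‖₂ → ∞. Let μ be a Borel probability measure on ℝ^D and let k ≥ 1. Then there exists an optimal k-level codebook: a k-tuple C* = (C*_1, …, C*_k) ∈ (ℝ^D)^k such that ∫ min_{1 ≤ j ≤ k} d(x, C*_j) dμ(x) ≤ ∫ min_{1 ≤ j ≤ k} d(x, C_j) dμ(x) for every k-tuple C ∈ (ℝ^D)^k, where the integrals are extended-real-valued lower Lebesgue integrals. No integrability restriction on μ is needed. -/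
open Filter MeasureTheory
open scoped ENNReal Topology

lemma ofReal_iInf_fin {ι : Type*} [Finite ι] [Nonempty ι] (f : ι → ℝ) :
    ENNReal.ofReal (⨅ i, f i) = ⨅ i, ENNReal.ofReal (f i) := by
  obtain ⟨i0, h0⟩ := Finite.exists_min f
  have hinf : ⨅ i, f i = f i0 :=
    le_antisymm (ciInf_le (Set.finite_range f).bddBelow i0) (le_ciInf h0)
  rw [hinf]
  exact le_antisymm (le_iInf fun i => ENNReal.ofReal_le_ofReal (h0 i)) (iInf_le _ i0)

/-- Existence of an optimal `k`-level codebook: if the distortion `d` is continuous,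
nonnegative, and coercive in its second argument (`d(x,y) → ∞` as `‖y‖₂ → ∞` for each
fixed `x`), then for any Borel probability measure `μ` on `ℝ^D` and any `k ≥ 1`, some
codebook `C*` minimizes the average distortion
`∫⁻ min_{1 ≤ j ≤ k} d(x, C_j) dμ(x)` over all `k`-tuples `C`. -/
theorem stmt_5 {D : ℕ} (dist : EuclideanSpace ℝ (Fin D) → EuclideanSpace ℝ (Fin D) → ℝ)
    (hd_nonneg : ∀ x y, 0 ≤ dist x y)
    (hd_cont : Continuous (fun p : EuclideanSpace ℝ (Fin D) × EuclideanSpace ℝ (Fin D) =>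
      dist p.1 p.2))
    (hd_coercive : ∀ x, Filter.Tendsto (fun y => dist x y)
      (Filter.comap (fun y : EuclideanSpace ℝ (Fin D) => ‖y‖) Filter.atTop) Filter.atTop)
    (μ : MeasureTheory.Measure (EuclideanSpace ℝ (Fin D))) [MeasureTheory.IsProbabilityMeasure μ]
    (k : ℕ) (hk : 1 ≤ k) :
    ∃ Cstar : Fin k → EuclideanSpace ℝ (Fin D),
      ∀ C : Fin k → EuclideanSpace ℝ (Fin D),
        ∫⁻ x, ENNReal.ofReal (⨅ j : Fin k, dist x (Cstar j)) ∂μ ≤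
          ∫⁻ x, ENNReal.ofReal (⨅ j : Fin k, dist x (C j)) ∂μ := by
  haveI : Nonempty (Fin k) := ⟨⟨0, hk⟩⟩
  set F : (Fin k → EuclideanSpace ℝ (Fin D)) → ℝ≥0∞ :=
    fun C => ∫⁻ x, ENNReal.ofReal (⨅ j : Fin k, dist x (C j)) ∂μ with hF
  suffices h : ∃ Cstar : Fin k → EuclideanSpace ℝ (Fin D), ∀ C, F Cstar ≤ F C by
    obtain ⟨Cst, h'⟩ := h
    exact ⟨Cst, fun C => by simpa only [hF] using h' C⟩
  set m := ⨅ C, F C with hm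
  -- continuity of y ↦ dist x y and x ↦ dist x y
  have hcont2 : ∀ x : EuclideanSpace ℝ (Fin D), Continuous fun y => dist x y := fun x =>
    hd_cont.comp (continuous_const.prodMk continuous_id)
  have hcont1 : ∀ y : EuclideanSpace ℝ (Fin D), Continuous fun x => dist x y := fun y =>
    hd_cont.comp (continuous_id.prodMk continuous_const)
  -- measurability of the integrand
  have hmeas : ∀ C : Fin k → EuclideanSpace ℝ (Fin D),
      Measurable fun x => ENNReal.ofReal (⨅ j : Fin k, dist x (C j)) := by
    intro C
    have hrw : ∀ x : EuclideanSpace ℝ (Fin D), ENNReal.ofReal (⨅ j : Fin k, dist x (C j))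
        = ⨅ j : Fin k, ENNReal.ofReal (dist x (C j)) := fun x => ofReal_iInf_fin _
    simp_rw [hrw]
    exact Measurable.iInf fun j =>
      (ENNReal.continuous_ofReal.comp (hcont1 (C j))).measurable
  by_cases hm_top : m = ⊤
  · refine ⟨fun _ => 0, fun C => ?_⟩
    have h1 : m ≤ F C := iInf_le _ C
    rw [hm_top, top_le_iff] at h1
    rw [h1]; exact le_top
  · -- minimizing sequence
    have hseq : ∀ n : ℕ, ∃ C : Fin k → EuclideanSpace ℝ (Fin D), F C < m + (1 : ℝ≥0∞) / (n + 1) := by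
      intro n
      have hlt : m < m + (1 : ℝ≥0∞) / (n + 1) := by
        refine ENNReal.lt_add_right hm_top ?_
        simp [ENNReal.div_eq_zero_iff]
      exact iInf_lt_iff.mp hlt
    choose Cs hCs using hseq
    have hpos : ∀ v : EuclideanSpace ℝ (Fin D), (0 : ℝ) < 1 + ‖v‖ := fun v => by positivity
    set b : ℕ → Fin k → EuclideanSpace ℝ (Fin D) := fun n j => (1 + ‖Cs n j‖)⁻¹ • Cs n j with hb
    have hbnorm : ∀ n j, ‖b n j‖ = ‖Cs n j‖ / (1 + ‖Cs n j‖) := by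
      intro n j
      rw [hb]
      simp only [norm_smul, norm_inv, Real.norm_eq_abs, abs_of_pos (hpos (Cs n j))]
      rw [inv_mul_eq_div]
    have hbmem : ∀ n, b n ∈ Set.univ.pi fun _ : Fin k => Metric.closedBall (0 : EuclideanSpace ℝ (Fin D)) 1 := by
      intro n
      rw [Set.mem_univ_pi]
      intro j
      rw [Metric.mem_closedBall, dist_zero_right, hbnorm]
      rw [div_le_one (hpos _)]
      linarith
    obtain ⟨bl, hbl_mem, φ, hφ, hconv⟩ :=
      (isCompact_univ_pi fun _ : Fin k => isCompact_closedBall (0 : EuclideanSpace ℝ (Fin D)) 1).tendsto_subseq hbmem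
    have hconvj : ∀ j, Tendsto (fun n => b (φ n) j) atTop (𝓝 (bl j)) := by
      intro j
      exact (tendsto_pi_nhds.mp hconv) j
    have hbl_le : ∀ j, ‖bl j‖ ≤ 1 := by
      intro j
      have := (Set.mem_univ_pi.mp hbl_mem) j
      rwa [Metric.mem_closedBall, dist_zero_right] at this
    -- inverse map
    set ψ : EuclideanSpace ℝ (Fin D) → EuclideanSpace ℝ (Fin D) := fun v => (1 - ‖v‖)⁻¹ • v with hψ
    have hψb : ∀ n j, ψ (b n j) = Cs n j := by
      intro n j
      have h1 : 1 - ‖b n j‖ = (1 + ‖Cs n j‖)⁻¹ := by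
        rw [hbnorm]
        field_simp
        ring
      rw [hψ]
      simp only
      rw [h1, hb]
      simp only
      rw [smul_smul, inv_inv, mul_inv_cancel₀ (ne_of_gt (hpos _)), one_smul]
    -- convergent coordinates
    have hconvS : ∀ j, ‖bl j‖ < 1 → Tendsto (fun n => Cs (φ n) j) atTop (𝓝 (ψ (bl j))) := by
      intro j hj
      have hcψ : ContinuousAt ψ (bl j) := by
        refine ContinuousAt.fun_smul ?_ continuousAt_id
        exact ((continuous_const.sub continuous_norm).continuousAt).inv₀
          (sub_ne_zero.mpr (ne_of_gt hj))
      have := hcψ.tendsto.comp (hconvj j)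
      simpa [Function.comp_def, hψb] using this
    -- divergent coordinates
    have hnormtop : ∀ j, ‖bl j‖ = 1 → Tendsto (fun n => ‖Cs (φ n) j‖) atTop atTop := by
      intro j hj
      rw [tendsto_atTop]
      intro M
      set M' := max M 0 with hM'
      have hM'0 : (0:ℝ) ≤ M' := le_max_right _ _
      have hfrac : M' / (1 + M') < 1 := by
        rw [div_lt_one (by linarith)]; linarith
      have hnb : Tendsto (fun n => ‖b (φ n) j‖) atTop (𝓝 1) := by
        have h := (continuous_norm.tendsto (bl j)).comp (hconvj j)
        rw [hj] at h
        simpa [Function.comp_def] using h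
      have hev : ∀ᶠ n in atTop, M' / (1 + M') < ‖b (φ n) j‖ :=
        hnb.eventually (lt_mem_nhds hfrac)
      refine hev.mono fun n hn => ?_
      rw [hbnorm] at hn
      set t := ‖Cs (φ n) j‖ with ht
      have ht0 : (0:ℝ) ≤ t := norm_nonneg _
      have hlt : M' * (1 + t) < t * (1 + M') := by
        rw [div_lt_div_iff₀ (by linarith) (hpos _)] at hn
        linarith [hn]
      have : M' < t := by nlinarith
      have : M ≤ t := le_trans (le_max_left _ _) (le_of_lt this)
      exact this
    have hcoer : ∀ (x : EuclideanSpace ℝ (Fin D)) j, ‖bl j‖ = 1 →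
        Tendsto (fun n => dist x (Cs (φ n) j)) atTop atTop := by
      intro x j hj
      have h1 : Tendsto (fun n => Cs (φ n) j) atTop
          (comap (fun y : EuclideanSpace ℝ (Fin D) => ‖y‖) atTop) := by
        rw [tendsto_comap_iff]
        exact hnormtop j hj
      have := (hd_coercive x).comp h1
      simpa [Function.comp_def] using this
    -- liminf of values ≤ m
    have hliminf_le : liminf (fun n => F (Cs (φ n))) atTop ≤ m := by
      refine ENNReal.le_of_forall_pos_le_add fun ε hε _ => ?_
      have hε' : ((ε : ℝ≥0∞)) ≠ 0 := by exact_mod_cast hε.ne'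
      obtain ⟨N, hN⟩ := ENNReal.exists_inv_nat_lt hε'
      have hev : ∀ᶠ n in atTop, F (Cs (φ n)) ≤ m + ε := by
        filter_upwards [eventually_ge_atTop N] with n hn
        have h1 : F (Cs (φ n)) < m + (1 : ℝ≥0∞) / (φ n + 1) := hCs (φ n)
        have h2 : (1 : ℝ≥0∞) / (φ n + 1) ≤ (N : ℝ≥0∞)⁻¹ := by
          rw [one_div, ENNReal.inv_le_inv]
          calc (N : ℝ≥0∞) ≤ (n : ℝ≥0∞) := by exact_mod_cast hn
            _ ≤ (φ n : ℝ≥0∞) := by exact_mod_cast hφ.le_apply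
            _ ≤ (φ n : ℝ≥0∞) + 1 := le_self_add
        calc F (Cs (φ n)) ≤ m + (1 : ℝ≥0∞) / (φ n + 1) := le_of_lt h1
          _ ≤ m + (N : ℝ≥0∞)⁻¹ := add_le_add_right h2 m
          _ ≤ m + ε := add_le_add_right (le_of_lt hN) m
      exact liminf_le_of_frequently_le hev.frequently
    by_cases hS : ∃ j0 : Fin k, ‖bl j0‖ < 1
    · obtain ⟨j0, hj0⟩ := hS
      set Cstar : Fin k → EuclideanSpace ℝ (Fin D) := fun j => if ‖bl j‖ < 1 then ψ (bl j) else ψ (bl j0) with hCstar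
      -- pointwise liminf bound
      have hpt : ∀ x : EuclideanSpace ℝ (Fin D), ENNReal.ofReal (⨅ j : Fin k, dist x (Cstar j)) ≤
          liminf (fun n => ENNReal.ofReal (⨅ j : Fin k, dist x (Cs (φ n) j))) atTop := by
        intro x
        set a : ℝ := ⨅ j : Fin k, dist x (Cstar j) with ha
        set L := liminf (fun n => ENNReal.ofReal (⨅ j : Fin k, dist x (Cs (φ n) j))) atTop with hL
        have ha_le : ∀ j, a ≤ dist x (Cstar j) := fun j =>
          ciInf_le (Set.finite_range _).bddBelow j
        have key : ∀ ε : ℝ, 0 < ε →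
            ∀ᶠ n in atTop, a - ε ≤ ⨅ j : Fin k, dist x (Cs (φ n) j) := by
          intro ε hε
          have hj : ∀ j, ∀ᶠ n in atTop, a - ε ≤ dist x (Cs (φ n) j) := by
            intro j
            rcases lt_or_eq_of_le (hbl_le j) with hlt | heq
            · have htt : Tendsto (fun n => dist x (Cs (φ n) j)) atTop
                  (𝓝 (dist x (ψ (bl j)))) :=
                ((hcont2 x).continuousAt).tendsto.comp (hconvS j hlt)
              have hgt : a - ε < dist x (ψ (bl j)) := by
                have h3 : a ≤ dist x (ψ (bl j)) := by
                  simpa [hCstar, hlt] using ha_le j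
                linarith
              exact (htt.eventually (lt_mem_nhds hgt)).mono fun n h => le_of_lt h
            · exact (hcoer x j heq).eventually_ge_atTop (a - ε)
          refine (eventually_all.mpr hj).mono fun n hn => le_ciInf fun j => hn j
        have key2 : ∀ ε : ℝ, 0 < ε → ENNReal.ofReal (a - ε) ≤ L := by
          intro ε hε
          have h1 : liminf (fun _ : ℕ => ENNReal.ofReal (a - ε)) atTop ≤ L :=
            liminf_le_liminf ((key ε hε).mono fun n h => ENNReal.ofReal_le_ofReal h)
          rwa [liminf_const] at h1
        have hcont0 : Tendsto (fun ε : ℝ => ENNReal.ofReal (a - ε)) (𝓝[>] 0)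
            (𝓝 (ENNReal.ofReal a)) := by
          have h1 : Tendsto (fun ε : ℝ => a - ε) (𝓝 0) (𝓝 (a - 0)) :=
            ((continuous_const.sub continuous_id).tendsto (0 : ℝ))
          rw [sub_zero] at h1
          have h2 := (ENNReal.continuous_ofReal.tendsto a).comp h1
          exact (h2.mono_left nhdsWithin_le_nhds)
        exact le_of_tendsto hcont0
          (eventually_mem_nhdsWithin.mono fun ε hε => key2 ε hε)
      refine ⟨Cstar, fun C => ?_⟩
      have h1 : F Cstar ≤ liminf (fun n => F (Cs (φ n))) atTop := by
        calc F Cstar = ∫⁻ x, ENNReal.ofReal (⨅ j : Fin k, dist x (Cstar j)) ∂μ := rfl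
          _ ≤ ∫⁻ x, liminf (fun n =>
              ENNReal.ofReal (⨅ j : Fin k, dist x (Cs (φ n) j))) atTop ∂μ :=
            lintegral_mono hpt
          _ ≤ liminf (fun n => F (Cs (φ n))) atTop :=
            lintegral_liminf_le fun n => hmeas _
      exact h1.trans (hliminf_le.trans (iInf_le _ C))
    · exfalso
      push_neg at hS
      have hall : ∀ j, ‖bl j‖ = 1 := fun j => le_antisymm (hbl_le j) (hS j)
      have hptT : ∀ x : EuclideanSpace ℝ (Fin D), liminf (fun n =>
          ENNReal.ofReal (⨅ j : Fin k, dist x (Cs (φ n) j))) atTop = ⊤ := by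
        intro x
        have htop : Tendsto (fun n => ⨅ j : Fin k, dist x (Cs (φ n) j)) atTop atTop := by
          rw [tendsto_atTop]
          intro M
          have hj : ∀ j, ∀ᶠ n in atTop, M ≤ dist x (Cs (φ n) j) := fun j =>
            (hcoer x j (hall j)).eventually_ge_atTop M
          exact (eventually_all.mpr hj).mono fun n hn => le_ciInf fun j => hn j
        have := ENNReal.tendsto_ofReal_atTop.comp htop
        exact this.liminf_eq
      have hbig : (⊤ : ℝ≥0∞) ≤ liminf (fun n => F (Cs (φ n))) atTop := by
        have h1 := lintegral_liminf_le (μ := μ) (u := atTop) fun n => hmeas (Cs (φ n))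
        have h2 : ∫⁻ x, liminf (fun n =>
            ENNReal.ofReal (⨅ j : Fin k, dist x (Cs (φ n) j))) atTop ∂μ = ⊤ := by
          simp_rw [hptT]
          simp [lintegral_const]
        rw [h2] at h1
        exact h1
      have : (⊤ : ℝ≥0∞) ≤ m := hbig.trans hliminf_le
      exact hm_top (top_le_iff.mp this)
end

section
/- Let d : ℝ^D × ℝ^D → [0, ∞) be a distortion function that is continuous and coercive in its second argument (for every fixed x, d(x, y) → ∞ as ‖y‖₂ → ∞), let μ be a Borel probability measure on ℝ^D, and let S ⊆ ℝ^D be a Borel set. Then S has a centroid: there exists u* ∈ ℝ^D such that ∫_S d(x, u*) dμ(x) ≤ ∫_S d(x, u) dμ(x) for every u ∈ ℝ^D, where the integrals are extended-real-valued lower Lebesgue integrals over S. -/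
open Filter MeasureTheory Topology ENNReal

/-- Existence of a centroid of a Borel set `S`: if the distortion `d` is continuous,
nonnegative, and coercive in its second argument (`d(x,y) → ∞` as `‖y‖₂ → ∞` for each
fixed `x`), and `μ` is a Borel probability measure on `ℝ^D`, then there exists
`u* ∈ ℝ^D` minimizing `u ↦ ∫⁻_S d(x, u) dμ(x)`. -/
theorem stmt_6 {D : ℕ} (dist : EuclideanSpace ℝ (Fin D) → EuclideanSpace ℝ (Fin D) → ℝ)
    (hd_nonneg : ∀ x y, 0 ≤ dist x y)
    (hd_cont : Continuous (fun p : EuclideanSpace ℝ (Fin D) × EuclideanSpace ℝ (Fin D) =>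
      dist p.1 p.2))
    (hd_coercive : ∀ x, Filter.Tendsto (fun y => dist x y)
      (Filter.comap (fun y : EuclideanSpace ℝ (Fin D) => ‖y‖) Filter.atTop) Filter.atTop)
    (μ : MeasureTheory.Measure (EuclideanSpace ℝ (Fin D))) [MeasureTheory.IsProbabilityMeasure μ]
    (S : Set (EuclideanSpace ℝ (Fin D))) (hS : MeasurableSet S) :
    ∃ ustar : EuclideanSpace ℝ (Fin D),
      ∀ u : EuclideanSpace ℝ (Fin D),
        ∫⁻ x in S, ENNReal.ofReal (dist x ustar) ∂μ ≤
          ∫⁻ x in S, ENNReal.ofReal (dist x u) ∂μ := by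
  classical
  set F : EuclideanSpace ℝ (Fin D) → ℝ≥0∞ :=
    fun u => ∫⁻ x in S, ENNReal.ofReal (dist x u) ∂μ with hFdef
  show ∃ ustar, ∀ u, F ustar ≤ F u
  have hmeas : ∀ u, Measurable fun x => ENNReal.ofReal (dist x u) := fun u =>
    (ENNReal.continuous_ofReal.comp
      (hd_cont.comp (continuous_id.prodMk continuous_const))).measurable
  have hcont2 : ∀ x, Continuous fun y => ENNReal.ofReal (dist x y) := fun x =>
    ENNReal.continuous_ofReal.comp (hd_cont.comp (continuous_const.prodMk continuous_id))
  -- trivial case: μ S = 0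
  by_cases hμ : μ S = 0
  · refine ⟨0, fun u => ?_⟩
    simp [hFdef, setLIntegral_measure_zero _ _ hμ]
  set c : ℝ≥0∞ := ⨅ u, F u with hcdef
  by_cases hc : c = ⊤
  · refine ⟨0, fun u => ?_⟩
    have : c ≤ F u := iInf_le F u
    rw [hc] at this
    exact le_top.trans this
  -- minimizing sequence
  have hcu : ∀ n : ℕ, ∃ u, F u < c + ((n : ℝ≥0∞) + 1)⁻¹ := by
    intro n
    have hne : ((n : ℝ≥0∞) + 1)⁻¹ ≠ 0 := by
      simp [ENNReal.inv_ne_zero, ENNReal.add_ne_top]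
    have : c < c + ((n : ℝ≥0∞) + 1)⁻¹ := ENNReal.lt_add_right hc hne
    rw [hcdef] at this
    exact iInf_lt_iff.mp this
  choose u hu using hcu
  have hu1 : ∀ n, F (u n) ≤ c + 1 := by
    intro n
    refine (hu n).le.trans (add_le_add_right ?_ c)
    exact ENNReal.inv_le_one.mpr (le_add_self)
  have hc1 : c + 1 < ⊤ := ENNReal.add_lt_top.mpr ⟨lt_top_iff_ne_top.mpr hc, ENNReal.one_lt_top⟩
  -- the minimizing sequence is bounded
  have hbdd : ∃ R : ℝ, ∀ n, ‖u n‖ ≤ R := by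
    by_contra h
    push_neg at h
    choose ψ hψ using h
    set v : ℕ → EuclideanSpace ℝ (Fin D) := fun n => u (ψ (n : ℝ)) with hvdef
    have hnorm : Tendsto (fun n : ℕ => ‖v n‖) atTop atTop :=
      tendsto_atTop_mono (fun n => (hψ (n : ℝ)).le) tendsto_natCast_atTop_atTop
    have hv : Tendsto v atTop (comap (fun y : EuclideanSpace ℝ (Fin D) => ‖y‖) atTop) :=
      tendsto_comap_iff.mpr hnorm
    have hpt : ∀ x, Tendsto (fun n => ENNReal.ofReal (dist x (v n))) atTop (𝓝 ⊤) :=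
      fun x => ENNReal.tendsto_ofReal_atTop.comp ((hd_coercive x).comp hv)
    have htop : (⊤ : ℝ≥0∞) ≤ liminf (fun n => F (v n)) atTop := by
      calc (⊤ : ℝ≥0∞) = ∫⁻ _ in S, ⊤ ∂μ := by
            rw [setLIntegral_const, ENNReal.top_mul hμ]
        _ = ∫⁻ x in S, liminf (fun n => ENNReal.ofReal (dist x (v n))) atTop ∂μ := by
            apply lintegral_congr
            intro x
            exact ((hpt x).liminf_eq).symm
        _ ≤ liminf (fun n => F (v n)) atTop :=
            lintegral_liminf_le (fun n => hmeas (v n))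
    have hle : liminf (fun n => F (v n)) atTop ≤ c + 1 := by
      refine (Filter.liminf_le_liminf (Eventually.of_forall fun n : ℕ => hu1 (ψ (n : ℝ)))).trans_eq ?_
      exact liminf_const _
    exact absurd (le_top.antisymm (htop.trans hle)) hc1.ne
  obtain ⟨R, hR⟩ := hbdd
  -- extract a convergent subsequence
  obtain ⟨a, -, φ, hφmono, hφtendsto⟩ :=
    tendsto_subseq_of_bounded (Metric.isBounded_closedBall (x := (0 : EuclideanSpace ℝ (Fin D))) (r := R))
      (fun n => by simpa [Metric.mem_closedBall, dist_zero_right] using hR n)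
  refine ⟨a, fun w => ?_⟩
  have key : F a ≤ c := by
    have h1 : F a ≤ liminf (fun n => F (u (φ n))) atTop := by
      calc F a ≤ ∫⁻ x in S, liminf (fun n => ENNReal.ofReal (dist x (u (φ n)))) atTop ∂μ := by
            apply lintegral_mono
            intro x
            exact (((hcont2 x).continuousAt.tendsto.comp hφtendsto).liminf_eq).ge
        _ ≤ liminf (fun n => F (u (φ n))) atTop :=
            lintegral_liminf_le (fun n => hmeas (u (φ n)))
    have h2 : liminf (fun n => F (u (φ n))) atTop ≤
        liminf (fun n : ℕ => c + ((n : ℝ≥0∞) + 1)⁻¹) atTop := by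
      refine Filter.liminf_le_liminf (Eventually.of_forall fun n => ?_)
        isBounded_ge_of_bot isCobounded_ge_of_top
      refine (hu (φ n)).le.trans (add_le_add_right ?_ c)
      exact ENNReal.inv_le_inv.mpr (by
        gcongr
        exact_mod_cast hφmono.le_apply)
    have h3 : Tendsto (fun n : ℕ => c + ((n : ℝ≥0∞) + 1)⁻¹) atTop (𝓝 c) := by
      have : Tendsto (fun n : ℕ => ((n : ℝ≥0∞) + 1)⁻¹) atTop (𝓝 0) := by
        have h4 := ENNReal.tendsto_inv_nat_nhds_zero.comp (tendsto_add_atTop_nat 1)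
        have heq : (fun n : ℕ => ((n : ℝ≥0∞) + 1)⁻¹)
            = ((fun n : ℕ => ((n : ℝ≥0∞))⁻¹) ∘ fun a => a + 1) := by
          funext n; simp [Function.comp]
        rw [heq]; exact h4
      simpa using tendsto_const_nhds.add this
    exact h1.trans (h2.trans_eq h3.liminf_eq)
  exact key.trans (iInf_le F w)
end
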